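/- There exists a positive constant C such that for every Calderón–Zygmund set R̃, setting R̃* = {x ∈ V : d(x, R̃) < h(R̃)/4}, one has μ(R̃*) ≤ C μ(R̃). -/

import Mathlib

open MeasureTheory Set ENNReal Filter Function

/-- A weighted homogeneous tree setting: the homogeneous tree of order `m+1`
(a connected acyclic graph in which every vertex has `m+1` neighbours),
with a fixed doubly infinite geodesic `geo`, a numeration `idx` of `geo`,
the associated level function `level`, and the weighted measure `μ`
with `μ {x} = m ^ level x`. -/
structure HomTreeSetting (m : ℕ) : Type 1 where
  V : Type
  measV : MeasurableSpace V
  measTop : measV = ⊤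
  hm : 2 ≤ m
  G : SimpleGraph V
  conn : G.Connected
  acyclic : G.IsAcyclic
  deg : ∀ x : V, (G.neighborSet x).ncard = m + 1
  geo : Set V
  geoNbrs : ∀ v ∈ geo, (G.neighborSet v ∩ geo).ncard = 2
  geoGeodesic : ∀ u ∈ geo, ∀ v ∈ geo, ∀ w : V,
    G.dist u w + G.dist w v = G.dist u v → w ∈ geo
  idx : geo → ℤ
  idxBij : Function.Bijective idx
  idxDist : ∀ x y : geo, |idx x - idx y| = (G.dist x.1 y.1 : ℤ)
  level : V → ℤ
  levelSpec : ∀ x : V, ∃ x' : geo,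
    (∀ z : geo, G.dist x x'.1 ≤ G.dist x z.1) ∧
    level x = idx x' - (G.dist x x'.1 : ℤ)
  μ : @MeasureTheory.Measure V measV
  μspec : ∀ s : Set V, μ s = ∑' x : s, (m : ℝ≥0∞) ^ (level x.1)

attribute [instance] HomTreeSetting.measV

namespace HomTreeSetting

variable {m : ℕ}

/-- `x` lies below `y`. -/
def Below (S : HomTreeSetting m) (x y : S.V) : Prop :=
  S.level x = S.level y - (S.G.dist x y : ℤ)

/-- An admissible trapezoid: either degenerate (a singleton, with height 1) or
the set of vertices lying below `root` whose level gap lies in `[ht, 2*ht)`. -/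
structure AdmTrap (S : HomTreeSetting m) where
  root : S.V
  ht : ℕ
  ht_pos : 1 ≤ ht
  degen : Bool
  degen_ht : degen = true → ht = 1

variable {S : HomTreeSetting m}

/-- The underlying set of vertices of an admissible trapezoid. -/
def AdmTrap.set (R : S.AdmTrap) : Set S.V :=
  if R.degen then {R.root}
  else {x | S.Below x R.root ∧ (R.ht : ℤ) ≤ S.level R.root - S.level x ∧
    S.level R.root - S.level x < 2 * (R.ht : ℤ)}

/-- The envelope (Calderón–Zygmund set) of an admissible trapezoid. -/
def AdmTrap.env (R : S.AdmTrap) : Set S.V :=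
  if R.degen then {R.root}
  else {x | S.Below x R.root ∧ (R.ht : ℤ) ≤ 2 * (S.level R.root - S.level x) ∧
    S.level R.root - S.level x < 4 * (R.ht : ℤ)}

/-- The width `w(R) = m ^ ℓ(x_R)` of an admissible trapezoid. -/
noncomputable def AdmTrap.width (R : S.AdmTrap) : ℝ≥0∞ :=
  (m : ℝ≥0∞) ^ (S.level R.root)

/-- The dilated set `R̃* = {x : d(x, R̃) < h(R̃)/4}` of a Calderón–Zygmund set. -/
def AdmTrap.star (R : S.AdmTrap) : Set S.V :=
  {x | ∃ y ∈ R.env, 4 * S.G.dist x y < R.ht}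

variable (S)

/-- `E` is a Calderón–Zygmund set, i.e. the envelope of an admissible trapezoid. -/
def IsCZ (E : Set S.V) : Prop := ∃ R : S.AdmTrap, E = R.env

/-- Average of `f` over the set `E` with respect to `μ`. -/
noncomputable def avg (f : S.V → ℂ) (E : Set S.V) : ℂ :=
  (S.μ E).toReal⁻¹ • ∫ x in E, f x ∂S.μ

/-- The `q`-mean oscillation `(μ(E)⁻¹ ∫_E |f - f_E|^q dμ)^(1/q)` of `f` on `E`. -/
noncomputable def osc (q : ℝ) (f : S.V → ℂ) (E : Set S.V) : ℝ :=
  ((S.μ E).toReal⁻¹ * ∫ x in E, ‖f x - S.avg f E‖ ^ q ∂S.μ) ^ (1 / q)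

/-- The `BMO_q(μ)` (semi)norm. -/
noncomputable def bmoNorm (q : ℝ) (f : S.V → ℂ) : ℝ :=
  ⨆ R : S.AdmTrap, S.osc q f R.env

/-- Membership in `BMO_q(μ)`. -/
def MemBMO (q : ℝ) (f : S.V → ℂ) : Prop :=
  BddAbove (Set.range fun R : S.AdmTrap => S.osc q f R.env)

/-- A `(1,p)`-atom (`p = ⊤` gives `(1,∞)`-atoms). -/
def IsAtom (p : ℝ≥0∞) (a : S.V → ℂ) : Prop :=
  ∃ R : S.AdmTrap, Function.support a ⊆ R.env ∧
    eLpNorm a p S.μ ≤ S.μ R.env ^ ((p⁻¹).toReal - 1) ∧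
    ∫ x, a x ∂S.μ = 0

/-- `f = ∑ j, c j • a j` is an atomic decomposition of `f` with `(1,p)`-atoms
`a j` and `∑ j, ‖c j‖ < ∞`, the series converging to `f` in `L¹(μ)`. -/
def IsAtomicDecomp (p : ℝ≥0∞) (f : S.V → ℂ) (c : ℕ → ℂ) (a : ℕ → S.V → ℂ) : Prop :=
  (∀ j, S.IsAtom p (a j)) ∧ Summable (fun j => ‖c j‖) ∧
  Filter.Tendsto
    (fun n => eLpNorm (fun x => f x - ∑ j ∈ Finset.range n, c j * a j x) 1 S.μ)
    Filter.atTop (nhds 0)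

/-- Membership in the atomic Hardy space `H^{1,p}(μ)`. -/
def MemH1 (p : ℝ≥0∞) (f : S.V → ℂ) : Prop :=
  MeasureTheory.Integrable f S.μ ∧ ∃ c a, S.IsAtomicDecomp p f c a

/-- The `H^{1,p}(μ)` norm: infimum of `∑ j, ‖c j‖` over atomic decompositions. -/
noncomputable def h1Norm (p : ℝ≥0∞) (f : S.V → ℂ) : ℝ :=
  sInf {t : ℝ | ∃ c a, S.IsAtomicDecomp p f c a ∧ t = ∑' j, ‖c j‖}

/-- Membership in `H^{1,p}_fin(μ)`: finite linear combinations of `(1,p)`-atoms. -/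
def MemH1fin (p : ℝ≥0∞) (f : S.V → ℂ) : Prop :=
  ∃ (n : ℕ) (c : ℕ → ℂ) (a : ℕ → S.V → ℂ),
    (∀ j, j < n → S.IsAtom p (a j)) ∧
    f = fun x => ∑ j ∈ Finset.range n, c j * a j x

/-- The sharp maximal function `f^{♯,q}`. -/
noncomputable def sharpMax (q : ℝ) (f : S.V → ℂ) (x : S.V) : ℝ :=
  ⨆ R : {R : S.AdmTrap // x ∈ R.env}, S.osc q f R.1.env

end HomTreeSetting
namespace HomTreeSetting

section Aux

open SimpleGraph

variable {m : ℕ} {S : HomTreeSetting m}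

private lemma dist0 {x y : S.V} : S.G.dist x y = 0 ↔ x = y :=
  S.conn.dist_eq_zero_iff

private lemma adj_dist_one {x y : S.V} (h : S.G.Adj x y) : S.G.dist x y = 1 := by
  have h1 : S.G.dist x y ≤ 1 := by
    simpa using SimpleGraph.dist_le h.toWalk
  have h0 : S.G.dist x y ≠ 0 := fun hc => h.ne (dist0.mp hc)
  omega

private lemma split_le {x y a : S.V} (p : S.G.Walk x y) (ha : a ∈ p.support) :
    S.G.dist x a + S.G.dist a y ≤ p.length := by
  obtain ⟨q, r, rfl⟩ := Walk.mem_support_iff_exists_append.mp ha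
  rw [Walk.length_append]
  exact Nat.add_le_add (SimpleGraph.dist_le q) (SimpleGraph.dist_le r)

private lemma path_length {x y : S.V} (p : S.G.Walk x y) (hp : p.IsPath) :
    p.length = S.G.dist x y := by
  obtain ⟨q, hq, hql⟩ := S.conn.exists_path_of_dist x y
  have h : (⟨p, hp⟩ : S.G.Path x y) = ⟨q, hq⟩ := S.acyclic.path_unique _ _
  rw [show p = q from congrArg Subtype.val h, hql]

private lemma gate {x : S.V} (w : S.geo) (hw : ∀ z : S.geo, S.G.dist x w.1 ≤ S.G.dist x z.1)
    (z : S.geo) : S.G.dist x z.1 = S.G.dist x w.1 + S.G.dist w.1 z.1 := by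
  obtain ⟨Q, hQ, hQl⟩ := S.conn.exists_path_of_dist x w.1
  obtain ⟨R, hR, hRl⟩ := S.conn.exists_path_of_dist w.1 z.1
  have hRgeo : ∀ a ∈ R.support, a ∈ S.geo := by
    intro a ha
    have h1 := split_le R ha
    have h2 := S.conn.dist_triangle (u := w.1) (v := a) (w := z.1)
    exact S.geoGeodesic w.1 w.2 z.1 z.2 a (by omega)
  have hQgeo : ∀ a ∈ Q.support, a ∈ S.geo → a = w.1 := by
    intro a ha hag
    have h1 := split_le Q ha
    have h2 : S.G.dist x w.1 ≤ S.G.dist x a := hw ⟨a, hag⟩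
    exact dist0.mp (by omega : S.G.dist a w.1 = 0)
  have hwt : w.1 ∉ R.support.tail := by
    have h1 := hR.support_nodup
    rw [R.support_eq_cons] at h1
    exact (List.nodup_cons.mp h1).1
  have hpath : (Q.append R).IsPath := by
    rw [Walk.isPath_def, Walk.support_append]
    refine List.Nodup.append hQ.support_nodup
      ((List.tail_sublist _).nodup hR.support_nodup) ?_
    intro a ha hat
    have : a = w.1 := hQgeo a ha (hRgeo a (List.mem_of_mem_tail hat))
    subst this
    exact hwt hat
  have h3 := path_length _ hpath
  rw [Walk.length_append, hQl, hRl] at h3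
  omega

private lemma proj (x : S.V) : ∃ w : S.geo, S.level x = S.idx w - (S.G.dist x w.1 : ℤ) ∧
    ∀ z : S.geo, S.G.dist x z.1 = S.G.dist x w.1 + S.G.dist w.1 z.1 := by
  obtain ⟨w, hmin, hlev⟩ := S.levelSpec x
  exact ⟨w, hlev, gate w hmin⟩

private lemma level_ge (x : S.V) (z : S.geo) :
    S.idx z - (S.G.dist x z.1 : ℤ) ≤ S.level x := by
  obtain ⟨w, hlev, hg⟩ := proj x
  have h1 : (S.G.dist x z.1 : ℤ) = S.G.dist x w.1 + S.G.dist w.1 z.1 := by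
    exact_mod_cast congrArg (Nat.cast : ℕ → ℤ) (hg z)
  have h3 : S.idx z - S.idx w ≤ (S.G.dist z.1 w.1 : ℤ) :=
    (le_abs_self _).trans_eq (S.idxDist z w)
  have h4 : (S.G.dist w.1 z.1 : ℤ) = (S.G.dist z.1 w.1 : ℤ) := by
    exact_mod_cast congrArg (Nat.cast : ℕ → ℤ) (SimpleGraph.dist_comm (G := S.G))
  omega

private lemma level_sub_le (x y : S.V) : S.level x - S.level y ≤ (S.G.dist x y : ℤ) := by
  obtain ⟨w, hlev, -⟩ := proj x
  have h1 := level_ge y w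
  have h2 : S.G.dist y w.1 ≤ S.G.dist y x + S.G.dist x w.1 := S.conn.dist_triangle
  have h3 : S.G.dist y x = S.G.dist x y := SimpleGraph.dist_comm
  omega

private lemma dist_far (x : S.V) : ∃ N : ℤ, ∀ z : S.geo, N ≤ S.idx z →
    (S.G.dist x z.1 : ℤ) = S.idx z - S.level x := by
  obtain ⟨w, hlev, hg⟩ := proj x
  refine ⟨S.idx w, fun z hz => ?_⟩
  have h2 : S.G.dist x z.1 = S.G.dist x w.1 + S.G.dist w.1 z.1 := hg z
  have h1 : |S.idx w - S.idx z| = (S.G.dist w.1 z.1 : ℤ) := S.idxDist w z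
  rw [abs_of_nonpos (by omega)] at h1
  omega

private lemma idx_surj (n : ℤ) : ∃ z : S.geo, S.idx z = n := S.idxBij.2 n

private lemma adj_dist_ne {x y : S.V} (h : S.G.Adj x y) (z : S.V) :
    S.G.dist x z ≠ S.G.dist y z := by
  intro heq
  obtain ⟨P, hP, hPl⟩ := S.conn.exists_path_of_dist z x
  have hy : y ∉ P.support := by
    intro hy
    have h1 := split_le P hy
    have h2 : S.G.dist y x = 1 := adj_dist_one h.symm
    have h3 : S.G.dist z y = S.G.dist y z := SimpleGraph.dist_comm
    have h4 : S.G.dist z x = S.G.dist x z := SimpleGraph.dist_comm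
    omega
  have hpath : (P.append h.toWalk).IsPath := by
    rw [Walk.isPath_def, Walk.support_append]
    refine List.Nodup.append hP.support_nodup (by simp [Adj.toWalk]) ?_
    intro a ha hat
    simp only [Adj.toWalk, Walk.support_cons, Walk.support_nil, List.tail_cons,
      List.mem_singleton] at hat
    subst hat
    exact hy ha
  have h5 := path_length _ hpath
  have h6 : (P.append h.toWalk).length = P.length + 1 := by
    simp [Walk.length_append, Adj.toWalk]
  have h3 : S.G.dist z y = S.G.dist y z := SimpleGraph.dist_comm
  have h4 : S.G.dist z x = S.G.dist x z := SimpleGraph.dist_comm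
  omega

end Aux

end HomTreeSetting
namespace HomTreeSetting

section Aux2

open SimpleGraph

variable {m : ℕ} {S : HomTreeSetting m}

private lemma first_step {y z : S.V} (h : 1 ≤ S.G.dist y z) :
    ∃ w, S.G.Adj y w ∧ S.G.dist w z + 1 = S.G.dist y z := by
  obtain ⟨P, hPl⟩ := (S.conn y z).exists_walk_length_eq_dist
  cases P with
  | nil => rw [← hPl] at h; simp at h
  | @cons _ v _ hadj Q =>
    refine ⟨v, hadj, ?_⟩
    have h1 : S.G.dist v z ≤ Q.length := SimpleGraph.dist_le Q
    have h2 : S.G.dist y z ≤ S.G.dist y v + S.G.dist v z := S.conn.dist_triangle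
    have h0 : S.G.dist y v = 1 := adj_dist_one hadj
    have h3 : Q.length + 1 = S.G.dist y z := by simpa [Walk.length_cons] using hPl
    omega

private lemma exists_parent (y : S.V) :
    ∃ w, S.G.Adj y w ∧ S.level w = S.level y + 1 := by
  obtain ⟨N, hN⟩ := dist_far y
  obtain ⟨z, hz⟩ := idx_surj (S := S) (max N (S.level y + 1))
  have h1 : (S.G.dist y z.1 : ℤ) = S.idx z - S.level y := hN z (by omega)
  have h2 : 1 ≤ S.G.dist y z.1 := by omega
  obtain ⟨w, hadj, hd⟩ := first_step h2
  have h6 := level_ge w z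
  have h7 : S.level w - S.level y ≤ (S.G.dist w y : ℤ) := level_sub_le w y
  have h8 : S.G.dist w y = 1 := adj_dist_one hadj.symm
  exact ⟨w, hadj, by omega⟩

private lemma parent_eq {y w w' : S.V} (h : S.G.Adj y w) (hl : S.level w = S.level y + 1)
    (h' : S.G.Adj y w') (hl' : S.level w' = S.level y + 1) : w = w' := by
  obtain ⟨Ny, hNy⟩ := dist_far y
  obtain ⟨Nw, hNw⟩ := dist_far w
  obtain ⟨Nw', hNw'⟩ := dist_far w'
  obtain ⟨z, hz⟩ := idx_surj (S := S) (max (max Ny Nw) (max Nw' (S.level y + 2)))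
  have h1 : (S.G.dist y z.1 : ℤ) = S.idx z - S.level y := hNy z (by omega)
  have h2 : (S.G.dist w z.1 : ℤ) = S.idx z - S.level w := hNw z (by omega)
  have h3 : (S.G.dist w' z.1 : ℤ) = S.idx z - S.level w' := hNw' z (by omega)
  obtain ⟨P, hP, hPl⟩ := S.conn.exists_path_of_dist w z.1
  obtain ⟨P', hP', hP'l⟩ := S.conn.exists_path_of_dist w' z.1
  have hyP : y ∉ P.support := by
    intro hc
    have h4 := split_le P hc
    have h5 : S.G.dist w y = 1 := adj_dist_one h.symm
    omega
  have hyP' : y ∉ P'.support := by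
    intro hc
    have h4 := split_le P' hc
    have h5 : S.G.dist w' y = 1 := adj_dist_one h'.symm
    omega
  have W : (Walk.cons h P).IsPath := (Walk.cons_isPath_iff _ _).mpr ⟨hP, hyP⟩
  have W' : (Walk.cons h' P').IsPath := (Walk.cons_isPath_iff _ _).mpr ⟨hP', hyP'⟩
  have heq : (⟨Walk.cons h P, W⟩ : S.G.Path y z.1) = ⟨Walk.cons h' P', W'⟩ :=
    S.acyclic.path_unique _ _
  have heq2 : Walk.cons h P = Walk.cons h' P' := congrArg Subtype.val heq
  have := congrArg (fun q : S.G.Walk y z.1 => q.getVert 1) heq2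
  simpa [Walk.getVert_cons_succ, Walk.getVert_zero] using this

private lemma below_trans {x y z : S.V} (h1 : S.Below x y) (h2 : S.Below y z) :
    S.Below x z := by
  have h1' : S.level x = S.level y - S.G.dist x y := h1
  have h2' : S.level y = S.level z - S.G.dist y z := h2
  have t : S.G.dist x z ≤ S.G.dist x y + S.G.dist y z := S.conn.dist_triangle
  have l : S.level z - S.level x ≤ (S.G.dist z x : ℤ) := level_sub_le z x
  have hc : S.G.dist z x = S.G.dist x z := SimpleGraph.dist_comm
  show S.level x = S.level z - S.G.dist x z
  omega

private lemma below_step_up {y r : S.V} (hb : S.Below y r) (hne : 1 ≤ S.G.dist y r) :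
    ∃ w, S.G.Adj y w ∧ S.level w = S.level y + 1 ∧ S.Below w r ∧
      S.G.dist w r + 1 = S.G.dist y r := by
  have hb' : S.level y = S.level r - S.G.dist y r := hb
  obtain ⟨w, hadj, hd⟩ := first_step hne
  have l1 : S.level r - S.level w ≤ (S.G.dist r w : ℤ) := level_sub_le r w
  have l2 : S.level w - S.level y ≤ (S.G.dist w y : ℤ) := level_sub_le w y
  have h8 : S.G.dist w y = 1 := adj_dist_one hadj.symm
  have hc : S.G.dist r w = S.G.dist w r := SimpleGraph.dist_comm
  refine ⟨w, hadj, by omega, ?_, hd⟩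
  show S.level w = S.level r - S.G.dist w r
  omega

private lemma adj_level {x y : S.V} (h : S.G.Adj x y) :
    S.level y = S.level x + 1 ∨ S.level y = S.level x - 1 := by
  have hlip1 := level_sub_le x y
  have hlip2 := level_sub_le y x
  have hd : S.G.dist x y = 1 := adj_dist_one h
  have hd' : S.G.dist y x = 1 := adj_dist_one h.symm
  rw [hd] at hlip1
  rw [hd'] at hlip2
  suffices hne : S.level x ≠ S.level y by omega
  intro heq
  obtain ⟨w, hwl, hwg⟩ := proj x
  obtain ⟨u, hul, hug⟩ := proj y
  have hne1 := adj_dist_ne h w.1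
  have hne2 := adj_dist_ne h u.1
  have t1 : S.G.dist y w.1 ≤ S.G.dist y x + S.G.dist x w.1 := S.conn.dist_triangle
  have t2 : S.G.dist x u.1 ≤ S.G.dist x y + S.G.dist y u.1 := S.conn.dist_triangle
  have lw := level_ge y w
  have lu := level_ge x u
  rcases Nat.lt_or_ge (S.G.dist y w.1) (S.G.dist x w.1) with hc | hc
  · omega
  · rcases Nat.lt_or_ge (S.G.dist x u.1) (S.G.dist y u.1) with hc2 | hc2
    · omega
    · -- here dist x u = dist y u + 1 and dist y w = dist x w + 1
      have hg : S.G.dist x u.1 = S.G.dist x w.1 + S.G.dist w.1 u.1 := hwg u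
      have h1 : |S.idx w - S.idx u| = (S.G.dist w.1 u.1 : ℤ) := S.idxDist w u
      rcases le_or_gt (S.idx u) (S.idx w) with hc3 | hc3
      · rw [abs_of_nonneg (by omega)] at h1
        omega
      · rw [abs_of_neg (by omega)] at h1
        omega

private lemma below_of_near : ∀ (j : ℕ) {x y r : S.V}, S.Below y r → S.G.dist x y = j →
    (j : ℤ) < S.level r - S.level y → S.Below x r := by
  intro j
  induction j with
  | zero =>
    intro x y r hbv hd _
    rw [dist0.mp hd]
    exact hbv
  | succ j ih =>
    intro x y r hbv hd hlt
    have hby : S.level y = S.level r - S.G.dist y r := hbv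
    have hyx : S.G.dist y x = S.G.dist x y := SimpleGraph.dist_comm
    have h1 : 1 ≤ S.G.dist y x := by omega
    obtain ⟨y', hadj, hdy'⟩ := first_step h1
    have hdc : S.G.dist y' x = S.G.dist x y' := SimpleGraph.dist_comm
    rcases adj_level hadj with hup | hdown
    · have hyr : 1 ≤ S.G.dist y r := by omega
      obtain ⟨w, hwadj, hwlev, hwb, hwd⟩ := below_step_up hbv hyr
      have hww : y' = w := parent_eq hadj hup hwadj hwlev
      subst hww
      have hby' : S.level y' = S.level r - S.G.dist y' r := hwb
      exact ih hwb (by omega) (by omega)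
    · have hb' : S.Below y' y := by
        show S.level y' = S.level y - S.G.dist y' y
        have h8 : S.G.dist y' y = 1 := adj_dist_one hadj.symm
        omega
      have hb2 := below_trans hb' hbv
      have hby2 : S.level y' = S.level r - S.G.dist y' r := hb2
      exact ih hb2 (by omega) (by omega)

end Aux2

end HomTreeSetting
namespace HomTreeSetting

section Aux3

open SimpleGraph

variable {m : ℕ} {S : HomTreeSetting m}

private lemma below_unique : ∀ (k : ℕ) {x c c' : S.V}, S.G.dist x c = k →
    S.Below x c → S.Below x c' → S.level c = S.level c' → c = c' := by
  intro k
  induction k with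
  | zero =>
    intro x c c' hd hb hb' hl
    have hxc : x = c := dist0.mp hd
    subst hxc
    have hb2 : S.level x = S.level c' - S.G.dist x c' := hb'
    have hb1 : S.level x = S.level x - S.G.dist x x := hb
    have : S.G.dist x c' = 0 := by omega
    exact dist0.mp this
  | succ k ih =>
    intro x c c' hd hb hb' hl
    have hb1 : S.level x = S.level c - S.G.dist x c := hb
    have hb2 : S.level x = S.level c' - S.G.dist x c' := hb'
    have h1 : 1 ≤ S.G.dist x c := by omega
    have h1' : 1 ≤ S.G.dist x c' := by omega
    obtain ⟨w, ha, hwl, hbw, hwd⟩ := below_step_up hb h1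
    obtain ⟨w', ha', hwl', hbw', hwd'⟩ := below_step_up hb' h1'
    have hww : w = w' := parent_eq ha hwl ha' hwl'
    subst hww
    exact ih (by omega) hbw hbw' hl

private def kids (S : HomTreeSetting m) (v : S.V) : Set S.V :=
  {c | S.G.Adj v c ∧ S.level c = S.level v - 1}

private lemma nbr_finite (v : S.V) : (S.G.neighborSet v).Finite :=
  Set.finite_of_ncard_ne_zero (by rw [S.deg]; omega)

private lemma kids_card (v : S.V) : (kids S v).Finite ∧ (kids S v).ncard = m := by
  obtain ⟨p, hp, hpl⟩ := exists_parent v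
  have hset : kids S v = S.G.neighborSet v \ {p} := by
    ext c
    constructor
    · rintro ⟨hadj, hlc⟩
      refine ⟨hadj, ?_⟩
      intro hc
      rw [Set.mem_singleton_iff] at hc
      subst hc
      omega
    · rintro ⟨hadj, hne⟩
      rw [Set.mem_singleton_iff] at hne
      have hadj' : S.G.Adj v c := hadj
      rcases adj_level hadj' with hup | hdown
      · exact absurd (parent_eq hadj' hup hp hpl) hne
      · exact ⟨hadj', hdown⟩
  have hfin : (kids S v).Finite := by
    rw [hset]; exact (nbr_finite v).diff
  have hpn : p ∉ kids S v := by
    intro hk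
    simp only [kids, Set.mem_setOf_eq] at hk
    omega
  have hins : insert p (kids S v) = S.G.neighborSet v := by
    rw [hset, Set.insert_diff_singleton]
    exact Set.insert_eq_of_mem hp
  have hcard := Set.ncard_insert_of_notMem hpn hfin
  rw [hins, S.deg] at hcard
  exact ⟨hfin, by omega⟩

private def slice (S : HomTreeSetting m) (v : S.V) (k : ℕ) : Set S.V :=
  {x | S.Below x v ∧ S.G.dist x v = k}

private lemma slice_zero (v : S.V) : slice S v 0 = {v} := by
  ext x
  simp only [slice, Set.mem_setOf_eq, Set.mem_singleton_iff]
  constructor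
  · rintro ⟨-, hdd⟩; exact dist0.mp hdd
  · rintro rfl
    have hs : S.G.dist x x = 0 := SimpleGraph.dist_self
    exact ⟨show S.level x = S.level x - S.G.dist x x by omega, hs⟩

private lemma below_of_kid {v c : S.V} (hc : c ∈ kids S v) : S.Below c v := by
  obtain ⟨hadj, hlc⟩ := hc
  show S.level c = S.level v - S.G.dist c v
  have h8 : S.G.dist c v = 1 := adj_dist_one hadj.symm
  omega

private lemma slice_succ (v : S.V) (k : ℕ) :
    slice S v (k + 1) = ⋃ c ∈ kids S v, slice S c k := by
  ext x
  simp only [slice, kids, Set.mem_iUnion, Set.mem_setOf_eq, exists_prop]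
  constructor
  · rintro ⟨hb, hdd⟩
    have hb' : S.level x = S.level v - S.G.dist x v := hb
    have h1 : 1 ≤ S.G.dist v x := by
      have hcm : S.G.dist v x = S.G.dist x v := SimpleGraph.dist_comm
      omega
    obtain ⟨c, hadj, hdcx⟩ := first_step h1
    have hcm : S.G.dist v x = S.G.dist x v := SimpleGraph.dist_comm
    have hcm2 : S.G.dist c x = S.G.dist x c := SimpleGraph.dist_comm
    have l4 : S.level c - S.level x ≤ (S.G.dist c x : ℤ) := level_sub_le c x
    rcases adj_level hadj with hup | hdown
    · omega
    · refine ⟨c, ⟨hadj, hdown⟩, ?_, by omega⟩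
      show S.level x = S.level c - S.G.dist x c
      omega
  · rintro ⟨c, ⟨hadj, hlc⟩, hb, hdd⟩
    have hbc : S.Below c v := below_of_kid ⟨hadj, hlc⟩
    have hbx := below_trans hb hbc
    have hb1 : S.level x = S.level c - S.G.dist x c := hb
    have hb2 : S.level x = S.level v - S.G.dist x v := hbx
    exact ⟨hbx, by omega⟩

private lemma measAll (s : Set S.V) : MeasurableSet s := by
  rw [S.measTop]
  trivial

private lemma slice_disj {v v' : S.V} (h : S.level v = S.level v') (hne : v ≠ v') (k : ℕ) :
    Disjoint (slice S v k) (slice S v' k) := by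
  rw [Set.disjoint_left]
  rintro x ⟨hb, hdd⟩ ⟨hb', hdd'⟩
  exact hne (below_unique k hdd hb hb' h)

private lemma meas_slice : ∀ (k : ℕ) (v : S.V),
    S.μ (slice S v k) = (m : ℝ≥0∞) ^ S.level v := by
  intro k
  induction k with
  | zero =>
    intro v
    rw [slice_zero, S.μspec]
    exact tsum_singleton v (fun x => (m : ℝ≥0∞) ^ S.level x)
  | succ k ih =>
    intro v
    obtain ⟨hfin, hcard⟩ := kids_card (S := S) v
    rw [slice_succ]
    have hre : (⋃ c ∈ kids S v, slice S c k) = ⋃ c ∈ hfin.toFinset, slice S c k := by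
      ext x
      simp [Set.Finite.mem_toFinset]
    rw [hre, measure_biUnion_finset ?disj (fun c _ => measAll _)]
    · have hsum : ∀ c ∈ hfin.toFinset, S.μ (slice S c k) = (m : ℝ≥0∞) ^ (S.level v - 1) := by
        intro c hc
        rw [Set.Finite.mem_toFinset] at hc
        rw [ih c, hc.2]
      rw [Finset.sum_congr rfl hsum, Finset.sum_const,
        ← Set.ncard_eq_toFinset_card _ hfin, hcard, nsmul_eq_mul]
      have hm0 : (m : ℝ≥0∞) ≠ 0 := by
        have h2m := S.hm
        simp only [ne_eq, Nat.cast_eq_zero]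
        omega
      have hmt : (m : ℝ≥0∞) ≠ ⊤ := ENNReal.natCast_ne_top m
      rw [show S.level v = 1 + (S.level v - 1) by ring, ENNReal.zpow_add hm0 hmt, zpow_one]
      ring_nf
    case disj =>
      intro c hc c' hc' hne
      rw [Finset.mem_coe, Set.Finite.mem_toFinset] at hc hc'
      exact slice_disj (by rw [hc.2, hc'.2]) hne k

private lemma meas_slices (v : S.V) (t : Finset ℕ) :
    S.μ (⋃ k ∈ t, slice S v k) = t.card * (m : ℝ≥0∞) ^ S.level v := by
  rw [measure_biUnion_finset ?_ (fun _ _ => measAll _)]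
  · rw [Finset.sum_congr rfl (fun k _ => meas_slice k v), Finset.sum_const, nsmul_eq_mul]
  · intro k hk k' hk' hne
    have hdj : Disjoint (slice S v k) (slice S v k') := by
      rw [Set.disjoint_left]
      rintro x ⟨hb, hdd⟩ ⟨hb', hdd'⟩
      exact hne (hdd.symm.trans hdd')
    exact hdj

end Aux3

end HomTreeSetting

/-- There is a positive constant `C` such that for every
Calderón–Zygmund set `R̃`, with `R̃* = {x : d(x, R̃) < h(R̃)/4}`, one has
`μ(R̃*) ≤ C μ(R̃)`. -/
theorem measure_star_le (m : ℕ) (S : HomTreeSetting m) :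
    ∃ C : ℝ, 0 < C ∧ ∀ R : S.AdmTrap, S.μ R.star ≤ ENNReal.ofReal C * S.μ R.env := by
  classical
  refine ⟨2, by norm_num, fun R => ?_⟩
  rw [show ENNReal.ofReal (2 : ℝ) = 2 by simp]
  cases hdg : R.degen with
  | true =>
    have hh : R.ht = 1 := R.degen_ht hdg
    have hsub : R.star ⊆ R.env := by
      intro x hx
      obtain ⟨y, hy, hd⟩ := hx
      have hd0 : S.G.dist x y = 0 := by omega
      rw [HomTreeSetting.dist0.mp hd0]
      exact hy
    calc S.μ R.star ≤ S.μ R.env := measure_mono hsub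
      _ ≤ 2 * S.μ R.env := le_mul_of_one_le_left zero_le one_le_two
  | false =>
    have henv : R.env = {x | S.Below x R.root ∧ (R.ht : ℤ) ≤ 2 * (S.level R.root - S.level x) ∧
        S.level R.root - S.level x < 4 * (R.ht : ℤ)} := by
      simp [HomTreeSetting.AdmTrap.env, hdg]
    have hht := R.ht_pos
    -- lower bound for the envelope
    have hsub1 : (⋃ k ∈ Finset.Ico R.ht (4 * R.ht), HomTreeSetting.slice S R.root k) ⊆ R.env := by
      intro x hx
      simp only [Set.mem_iUnion, Finset.mem_Ico, exists_prop] at hx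
      obtain ⟨k, ⟨hk1, hk2⟩, hb, hdd⟩ := hx
      have hb' : S.level x = S.level R.root - S.G.dist x R.root := hb
      rw [henv]
      exact ⟨hb, by omega, by omega⟩
    have hlow : ((3 * R.ht : ℕ) : ℝ≥0∞) * (m : ℝ≥0∞) ^ S.level R.root ≤ S.μ R.env := by
      have h1 := HomTreeSetting.meas_slices (S := S) R.root (Finset.Ico R.ht (4 * R.ht))
      rw [Nat.card_Ico, show 4 * R.ht - R.ht = 3 * R.ht by omega] at h1
      exact h1 ▸ measure_mono hsub1
    -- upper bound for the dilated set
    have hsub2 : R.star ⊆ ⋃ k ∈ Finset.range (5 * R.ht + 1),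
        HomTreeSetting.slice S R.root k := by
      intro x hx
      obtain ⟨y, hy, hdxy⟩ := hx
      rw [henv] at hy
      obtain ⟨hby, h2g, h4g⟩ := hy
      have hby' : S.level y = S.level R.root - S.G.dist y R.root := hby
      have hcast : (4 * S.G.dist x y : ℤ) < (R.ht : ℤ) := by exact_mod_cast hdxy
      have hblt : ((S.G.dist x y : ℕ) : ℤ) < S.level R.root - S.level y := by omega
      have hbx : S.Below x R.root := HomTreeSetting.below_of_near (S.G.dist x y) hby rfl hblt
      have hbx' : S.level x = S.level R.root - S.G.dist x R.root := hbx
      have l1 : S.level y - S.level x ≤ (S.G.dist y x : ℤ) := HomTreeSetting.level_sub_le y x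
      have hcm : S.G.dist y x = S.G.dist x y := SimpleGraph.dist_comm
      simp only [Set.mem_iUnion, Finset.mem_range, exists_prop]
      exact ⟨S.G.dist x R.root, by omega, hbx, rfl⟩
    have hup : S.μ R.star ≤ ((5 * R.ht + 1 : ℕ) : ℝ≥0∞) * (m : ℝ≥0∞) ^ S.level R.root := by
      have h2 := HomTreeSetting.meas_slices (S := S) R.root (Finset.range (5 * R.ht + 1))
      rw [Finset.card_range] at h2
      exact h2 ▸ measure_mono hsub2
    calc S.μ R.star ≤ ((5 * R.ht + 1 : ℕ) : ℝ≥0∞) * (m : ℝ≥0∞) ^ S.level R.root := hup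
      _ ≤ ((6 * R.ht : ℕ) : ℝ≥0∞) * (m : ℝ≥0∞) ^ S.level R.root := by
          refine mul_le_mul_left ?_ _
          exact_mod_cast Nat.cast_le.mpr (by omega : 5 * R.ht + 1 ≤ 6 * R.ht)
      _ = 2 * (((3 * R.ht : ℕ) : ℝ≥0∞) * (m : ℝ≥0∞) ^ S.level R.root) := by
          push_cast
          ring
      _ ≤ 2 * S.μ R.env := mul_le_mul_right hlow 2
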